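/- (Gradient of the negative-dominant InfoNCE objective.) Let E be a real inner product space, let P and N be disjoint finite index sets with N nonempty, and set A := P ∪ N. For each a ∈ A let s_a : E → ℝ be a function differentiable at a point p ∈ E, with gradient ∇s_a(p). Assume Σ_{n ∈ N} (1 − s_n(p)) > 0 and Z' := Σ_{a ∈ A} (1 − s_a(p)) > 0. Define L : E → ℝ by L(q) := − log( (1/|N|) · ( Σ_{n ∈ N} (1 − s_n(q)) ) / ( Σ_{a ∈ A} (1 − s_a(q)) ) ). Then L is differentiable at p and its gradient is ∇L(p) = (1/Z') · ( − Σ_{p' ∈ P} ∇s_{p'}(p) + ( Σ_{p' ∈ P} (1 − s_{p'}(p)) / Σ_{n ∈ N} (1 − s_n(p)) ) · Σ_{n ∈ N} ∇s_n(p) ). -/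

import Mathlib

open scoped RealInnerProductSpace

/-- **Gradient of the negative-dominant InfoNCE objective.** The objective replaces similarities
`s_a` with dissimilarities `1 - s_a` and places the negatives in the numerator; its gradient at
`p` amplifies the negative gradients by the factor `(Σ_{p' ∈ P} (1 - s_{p'}(p))) / (Σ_{n ∈ N} (1 - s_n(p)))`. -/
theorem gradient_negative_dominant_infoNCE
    {E : Type*} [NormedAddCommGroup E] [InnerProductSpace ℝ E] [CompleteSpace E]
    {ι : Type*} [DecidableEq ι] (P N : Finset ι) (hdisj : Disjoint P N) (hN : N.Nonempty)
    (s : ι → E → ℝ) (g : ι → E) (p : E)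
    (hgrad : ∀ a ∈ P ∪ N, HasGradientAt (s a) (g a) p)
    (hSN : 0 < ∑ n ∈ N, (1 - s n p))
    (hZ' : 0 < ∑ a ∈ P ∪ N, (1 - s a p)) :
    HasGradientAt
      (fun q : E => - Real.log
        ((1 / (N.card : ℝ)) * (∑ n ∈ N, (1 - s n q)) / (∑ a ∈ P ∪ N, (1 - s a q))))
      ((1 / ∑ a ∈ P ∪ N, (1 - s a p)) •
        (- (∑ p' ∈ P, g p')
          + ((∑ p' ∈ P, (1 - s p' p)) / (∑ n ∈ N, (1 - s n p))) • (∑ n ∈ N, g n)))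
      p := by
  classical
  have hNcard : (0:ℝ) < N.card := by exact_mod_cast Finset.card_pos.mpr hN
  set c : ℝ := 1 / (N.card : ℝ) with hc
  have hcpos : 0 < c := by positivity
  -- derivatives of each term
  have hfd : ∀ a ∈ P ∪ N, HasFDerivAt (fun q => 1 - s a q)
      (-((InnerProductSpace.toDual ℝ E) (g a) : E →L[ℝ] ℝ)) p := by
    intro a ha
    exact (hgrad a ha).hasFDerivAt.const_sub 1
  have hSN' : HasFDerivAt (fun q => ∑ n ∈ N, (1 - s n q))
      (∑ n ∈ N, -((InnerProductSpace.toDual ℝ E) (g n) : E →L[ℝ] ℝ)) p :=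
    HasFDerivAt.fun_sum fun n hn => hfd n (Finset.mem_union_right _ hn)
  have hSA' : HasFDerivAt (fun q => ∑ a ∈ P ∪ N, (1 - s a q))
      (∑ a ∈ P ∪ N, -((InnerProductSpace.toDual ℝ E) (g a) : E →L[ℝ] ℝ)) p :=
    HasFDerivAt.fun_sum fun a ha => hfd a ha
  have hSAne : (∑ a ∈ P ∪ N, (1 - s a p)) ≠ 0 := ne_of_gt hZ'
  have hSNne : (∑ n ∈ N, (1 - s n p)) ≠ 0 := ne_of_gt hSN
  -- derivative of the inverse of the denominator
  have hInv : HasFDerivAt (fun q => (∑ a ∈ P ∪ N, (1 - s a q))⁻¹)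
      ((-((∑ a ∈ P ∪ N, (1 - s a p)) ^ 2)⁻¹) •
        (∑ a ∈ P ∪ N, -((InnerProductSpace.toDual ℝ E) (g a) : E →L[ℝ] ℝ))) p :=
    (hasDerivAt_inv hSAne).comp_hasFDerivAt p hSA'
  have hF : HasFDerivAt
      (fun q => (c * ∑ n ∈ N, (1 - s n q)) * (∑ a ∈ P ∪ N, (1 - s a q))⁻¹)
      ((c * ∑ n ∈ N, (1 - s n p)) •
          ((-((∑ a ∈ P ∪ N, (1 - s a p)) ^ 2)⁻¹) •
            (∑ a ∈ P ∪ N, -((InnerProductSpace.toDual ℝ E) (g a) : E →L[ℝ] ℝ)))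
        + (∑ a ∈ P ∪ N, (1 - s a p))⁻¹ •
            (c • (∑ n ∈ N, -((InnerProductSpace.toDual ℝ E) (g n) : E →L[ℝ] ℝ)))) p :=
    (hSN'.const_mul c).mul hInv
  have hFne : (c * ∑ n ∈ N, (1 - s n p)) * (∑ a ∈ P ∪ N, (1 - s a p))⁻¹ ≠ 0 := by
    positivity
  have hlog := (hF.log hFne).fun_neg
  rw [hasGradientAt_iff_hasFDerivAt]
  simp only [div_eq_mul_inv]
  convert hlog using 1
  · rfl
  · rfl
  ext w
  have hsplit : ∀ f : ι → ℝ, ∑ a ∈ P ∪ N, f a = ∑ a ∈ P, f a + ∑ a ∈ N, f a :=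
    fun f => Finset.sum_union hdisj
  simp only [ContinuousLinearMap.neg_apply, ContinuousLinearMap.smul_apply,
    ContinuousLinearMap.add_apply, ContinuousLinearMap.coe_sum', Finset.sum_apply,
    InnerProductSpace.toDual_apply_apply, smul_eq_mul]
  rw [hsplit (fun a => 1 - s a p), hsplit (fun a => -⟪g a, w⟫)]
  simp only [inner_smul_left, inner_add_left, inner_neg_left, inner_sum, sum_inner,
    RCLike.conj_to_real, real_inner_comm, Finset.sum_neg_distrib]
  set b1 := ∑ a ∈ P, (1 - s a p) with hb1
  set b2 := ∑ a ∈ N, (1 - s a p) with hb2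
  set a1 := ∑ x ∈ P, ⟪w, g x⟫ with ha1
  set a2 := ∑ x ∈ N, ⟪w, g x⟫ with ha2
  have h2 : b2 ≠ 0 := hSNne
  have h12 : b1 + b2 ≠ 0 := by rw [hb1, hb2, ← hsplit (fun a => 1 - s a p)]; exact hSAne
  have hcne : c ≠ 0 := ne_of_gt hcpos
  field_simp
  ring
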